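/- Let R ⊆ S be integral domains and A a matrix with entries in R. Then A satisfies the columns condition over R if and only if it satisfies the columns condition over S. -/

import Mathlib

open BigOperators

/-- A matrix `A` over `S` is partition regular over the `S`-module `M` for `r` colours if
every colouring of `M` with `r` colours admits a nonzero monochromatic solution of `A m = 0`. -/
def IsPR {S : Type*} [CommRing S] {k l : ℕ} (A : Matrix (Fin k) (Fin l) S)
    (M : Type*) [AddCommGroup M] [Module S M] (r : ℕ) : Prop :=
  ∀ χ : M → Fin r, ∃ m : Fin l → M, m ≠ 0 ∧
    (∀ i, ∑ j, A i j • m j = 0) ∧ ∀ j j', χ (m j) = χ (m j')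

/-- Partition regularity for every (positive) finite number of colours. -/
def IsPRAll {S : Type*} [CommRing S] {k l : ℕ} (A : Matrix (Fin k) (Fin l) S)
    (M : Type*) [AddCommGroup M] [Module S M] : Prop :=
  ∀ r : ℕ, 1 ≤ r → IsPR A M r

/-- The columns condition for a matrix over a domain, with the span taken in the
fraction field. -/
def ColumnsCondition {R : Type*} [CommRing R] [IsDomain R] {k l : ℕ}
    (A : Matrix (Fin k) (Fin l) R) : Prop :=
  ∃ (m : ℕ) (I : Fin (m + 1) → Finset (Fin l)),
    (∀ t, (I t).Nonempty) ∧
    (∀ t t', t ≠ t' → Disjoint (I t) (I t')) ∧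
    (∀ j : Fin l, ∃ t, j ∈ I t) ∧
    (∀ i : Fin k, ∑ j ∈ I 0, A i j = 0) ∧
    ∀ t : Fin (m + 1), 0 < t →
      (fun i : Fin k => algebraMap R (FractionRing R) (∑ j ∈ I t, A i j)) ∈
        Submodule.span (FractionRing R)
          ((fun j (i : Fin k) => algebraMap R (FractionRing R) (A i j)) ''
            {j | ∃ t', t' < t ∧ j ∈ I t'})


section aux
variable {K L : Type*} [Field K] [Field L] (ψ : K →+* L) {k : ℕ}

/-- Coordinatewise application of `ψ` as a semilinear map. -/
def piSemilinear (ψ : K →+* L) (k : ℕ) : (Fin k → K) →ₛₗ[ψ] (Fin k → L) where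
  toFun x := fun i => ψ (x i)
  map_add' x y := by ext i; simp
  map_smul' c x := by ext i; simp [Pi.smul_apply]

lemma mem_span_iff_semilinear (v : Fin k → K) (s : Set (Fin k → K)) :
    v ∈ Submodule.span K s ↔
      (fun i => ψ (v i)) ∈ Submodule.span L ((fun (w : Fin k → K) i => ψ (w i)) '' s) := by
  constructor
  · intro hv
    induction hv using Submodule.span_induction with
    | mem x hx => exact Submodule.subset_span ⟨x, hx, rfl⟩
    | zero =>
        have : (fun i => ψ ((0 : Fin k → K) i)) = 0 := by ext i; simp
        rw [this]; exact Submodule.zero_mem _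
    | add x y _ _ hx hy =>
        have : (fun i => ψ ((x + y) i)) = (fun i => ψ (x i)) + fun i => ψ (y i) := by
          ext i; simp
        rw [this]; exact Submodule.add_mem _ hx hy
    | smul c x _ hx =>
        have : (fun i => ψ ((c • x) i)) = ψ c • fun i => ψ (x i) := by
          ext i; simp
        rw [this]; exact Submodule.smul_mem _ _ hx
  · intro hv
    by_contra hnv
    obtain ⟨f, hf1, hf0⟩ := Submodule.exists_dual_map_eq_bot_of_notMem hnv inferInstance
    -- define g : (Fin k → L) →ₗ[L] L
    set g : (Fin k → L) →ₗ[L] L :=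
      { toFun := fun x => ∑ i, ψ (f (Pi.single i 1)) * x i
        map_add' := by intro x y; simp [mul_add, Finset.sum_add_distrib]
        map_smul' := by
          intro c x
          simp [Finset.mul_sum, mul_left_comm]
      } with hg
    have key : ∀ x : Fin k → K, g (fun i => ψ (x i)) = ψ (f x) := by
      intro x
      have hx : x = ∑ i, x i • (Pi.single i 1 : Fin k → K) := by
        ext i; simp [Pi.single_apply]
      conv_rhs => rw [hx]
      simp [hg, map_sum, mul_comm]
    have hker : Submodule.span L ((fun (w : Fin k → K) i => ψ (w i)) '' s) ≤
        LinearMap.ker g := by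
      rw [Submodule.span_le]
      rintro _ ⟨w, hw, rfl⟩
      have hfw : f w = 0 := by
        have : f w ∈ Submodule.map f (Submodule.span K s) :=
          Submodule.mem_map_of_mem (Submodule.subset_span hw)
        rw [hf0] at this
        simpa using this
      simp [LinearMap.mem_ker, key w, hfw]
    have := hker hv
    rw [LinearMap.mem_ker, key v] at this
    exact hf1 (ψ.injective (this.trans (map_zero ψ).symm))
end aux

theorem columnsCondition_iff_of_subring {R S : Type*} [CommRing R] [IsDomain R]
    [CommRing S] [IsDomain S] [Algebra R S]
    (hinj : Function.Injective (algebraMap R S))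
    {k l : ℕ} (A : Matrix (Fin k) (Fin l) R) :
    ColumnsCondition A ↔ ColumnsCondition (A.map (algebraMap R S)) := by
  classical
  set K := FractionRing R
  set L := FractionRing S
  set φ := algebraMap R S
  have hφmem : nonZeroDivisors R ≤ (nonZeroDivisors S).comap φ := by
    intro x hx
    refine Submonoid.mem_comap.mpr (mem_nonZeroDivisors_of_ne_zero ?_)
    intro h0
    exact nonZeroDivisors.ne_zero hx (hinj (h0.trans (map_zero φ).symm))
  set ψ : K →+* L := IsLocalization.map (M := nonZeroDivisors R) (T := nonZeroDivisors S) L φ hφmem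
  have hcomm : ∀ a : R, ψ (algebraMap R (FractionRing R) a) = algebraMap S (FractionRing S) (φ a) := fun a =>
    IsLocalization.map_eq hφmem a
  constructor
  · rintro ⟨m, I, h1, h2, h3, h4, h5⟩
    refine ⟨m, I, h1, h2, h3, ?_, ?_⟩
    · intro i
      have : ∑ j ∈ I 0, A.map φ i j = φ (∑ j ∈ I 0, A i j) := by
        simp [Matrix.map_apply, map_sum]
      rw [this, h4 i, map_zero]
    · intro t ht
      have := (mem_span_iff_semilinear ψ _ _).mp (h5 t ht)
      rw [Set.image_image] at this
      convert this using 2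
      all_goals
        first
        | (ext w
           constructor <;> rintro ⟨j, hj, rfl⟩ <;>
             exact ⟨j, hj, by funext i; simp [Matrix.map_apply, hcomm]⟩)
        | simp [Matrix.map_apply, map_sum, hcomm]
      all_goals rfl
  · rintro ⟨m, I, h1, h2, h3, h4, h5⟩
    refine ⟨m, I, h1, h2, h3, ?_, ?_⟩
    · intro i
      apply hinj
      rw [map_zero, map_sum]
      simpa [Matrix.map_apply] using h4 i
    · intro t ht
      rw [mem_span_iff_semilinear ψ, Set.image_image]
      have := h5 t ht
      convert this using 2
      all_goals
        first
        | (ext w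
           constructor <;> rintro ⟨j, hj, rfl⟩ <;>
             exact ⟨j, hj, by funext i; simp [Matrix.map_apply, hcomm]⟩)
        | simp [Matrix.map_apply, map_sum, hcomm]
      all_goals rfl
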